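/- Let V'_{xx} ∈ ℝ^{n×n}, V'_{xθ} ∈ ℝ^{n×p}, f_x ∈ ℝ^{n×n}, f_u ∈ ℝ^{n×m}, f_θ ∈ ℝ^{n×p}, H_{xx} ∈ ℝ^{n×n}, H_{xu} ∈ ℝ^{n×m}, H_{ux} ∈ ℝ^{m×n}, H_{uu} ∈ ℝ^{m×m}, H_{xθ} ∈ ℝ^{n×p}, H_{uθ} ∈ ℝ^{m×p}, and dX ∈ ℝ^{n×p}, dU ∈ ℝ^{m×p}. Define dX₊ = f_x dX + f_u dU + f_θ and dΛ₊ = V'_{xx} dX₊ + V'_{xθ}. Define Q_{xx} = H_{xx} + f_xᵀ V'_{xx} f_x, Q_{xu} = H_{xu} + f_xᵀ V'_{xx} f_u, Q_{xθ} = H_{xθ} + f_xᵀ V'_{xθ} + f_xᵀ V'_{xx} f_θ, Q_{ux} = H_{ux} + f_uᵀ V'_{xx} f_x, Q_{uu} = H_{uu} + f_uᵀ V'_{xx} f_u, Q_{uθ} = H_{uθ} + f_uᵀ V'_{xθ} + f_uᵀ V'_{xx} f_θ. Then: (a) Q_{xx} dX + Q_{xu} dU + Q_{xθ} = H_{xx}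 dX + H_{xu} dU + H_{xθ} + f_xᵀ dΛ₊, and (b) Q_{ux} dX + Q_{uu} dU + Q_{uθ} = H_{ux} dX + H_{uu} dU + H_{uθ} + f_uᵀ dΛ₊. -/
import Mathlib


open Matrix

/-- Stage-wise identity of the paper's Lemma 1 (Appendix A): the differential
Bellman-principle conditions written with the cost-to-go Hessians
`Q_{··}` (which fold the next-step value-function derivatives `V'_{xx}`,
`V'_{xθ}` into the stage data) coincide with the differential PMP conditions
written with the Hamiltonian Hessians `H_{··}` and the differentiated costate
`dΛ₊ = V'_{xx} dX₊ + V'_{xθ}`, where `dX₊ = f_x dX + f_u dU + f_θ`. -/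
theorem stmt14 {n m p : ℕ}
    (V'xx : Matrix (Fin n) (Fin n) ℝ)
    (V'xθ : Matrix (Fin n) (Fin p) ℝ)
    (fx : Matrix (Fin n) (Fin n) ℝ)
    (fu : Matrix (Fin n) (Fin m) ℝ)
    (fθ : Matrix (Fin n) (Fin p) ℝ)
    (Hxx : Matrix (Fin n) (Fin n) ℝ)
    (Hxu : Matrix (Fin n) (Fin m) ℝ)
    (Hux : Matrix (Fin m) (Fin n) ℝ)
    (Huu : Matrix (Fin m) (Fin m) ℝ)
    (Hxθ : Matrix (Fin n) (Fin p) ℝ)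
    (Huθ : Matrix (Fin m) (Fin p) ℝ)
    (dX : Matrix (Fin n) (Fin p) ℝ)
    (dU : Matrix (Fin m) (Fin p) ℝ) :
    let dXp : Matrix (Fin n) (Fin p) ℝ := fx * dX + fu * dU + fθ
    let dΛp : Matrix (Fin n) (Fin p) ℝ := V'xx * dXp + V'xθ
    let Qxx : Matrix (Fin n) (Fin n) ℝ := Hxx + fxᵀ * V'xx * fx
    let Qxu : Matrix (Fin n) (Fin m) ℝ := Hxu + fxᵀ * V'xx * fu
    let Qxθ : Matrix (Fin n) (Fin p) ℝ := Hxθ + fxᵀ * V'xθ + fxᵀ * V'xx * fθ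
    let Qux : Matrix (Fin m) (Fin n) ℝ := Hux + fuᵀ * V'xx * fx
    let Quu : Matrix (Fin m) (Fin m) ℝ := Huu + fuᵀ * V'xx * fu
    let Quθ : Matrix (Fin m) (Fin p) ℝ := Huθ + fuᵀ * V'xθ + fuᵀ * V'xx * fθ
    (Qxx * dX + Qxu * dU + Qxθ = Hxx * dX + Hxu * dU + Hxθ + fxᵀ * dΛp) ∧
    (Qux * dX + Quu * dU + Quθ = Hux * dX + Huu * dU + Huθ + fuᵀ * dΛp) := by
  intro dXp dΛp Qxx Qxu Qxθ Qux Quu Quθ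
  constructor <;> simp only [dXp, dΛp, Qxx, Qxu, Qxθ, Qux, Quu, Quθ] <;> simp only [Matrix.mul_add, Matrix.add_mul, Matrix.mul_assoc] <;> abel
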